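/- arXiv:1303.5676 — 2 statements merged into one kernel-verified Lean document; each statement's English description precedes it below -/
import Mathlib

section
/- Let A, B, C be points in the Euclidean plane (EuclideanSpace ℝ (Fin 2)) such that the angle ∠ A B C at the vertex B equals 3π/5 (the interior angle of a regular pentagon). Then dist A B + dist B C ≤ 2 · dist A C. -/
/-- Law-of-cosines estimate for the interior angle `3π/5` of a regular pentagon:
if the angle at `B` equals `3π/5`, then `dist A B + dist B C ≤ 2 · dist A C`. -/
theorem pentagon_angle_edge_path_bound (A B C : EuclideanSpace ℝ (Fin 2))
    (h : EuclideanGeometry.angle A B C = 3 * Real.pi / 5) :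
    dist A B + dist B C ≤ 2 * dist A C := by
  have hc := EuclideanGeometry.law_cos A B C
  rw [h, dist_comm C B] at hc
  have hcos : Real.cos (3 * Real.pi / 5) ≤ 0 := by
    apply Real.cos_nonpos_of_pi_div_two_le_of_le
    · nlinarith [Real.pi_pos]
    · nlinarith [Real.pi_pos]
  have hab : (0:ℝ) ≤ dist A B := dist_nonneg
  have hbc : (0:ℝ) ≤ dist B C := dist_nonneg
  have hac : (0:ℝ) ≤ dist A C := dist_nonneg
  nlinarith [sq_nonneg (dist A B - dist B C), mul_nonneg hab hbc,
    mul_nonneg (mul_nonneg hab hbc) (neg_nonneg.mpr hcos)]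
end

section
/- Let r := 1/(2·sin(π/5)) and for k = 0,1,2,3,4 let v_k := (r·cos(2πk/5), r·sin(2πk/5)) ∈ ℝ² (with the Euclidean norm), so that v₀,…,v₄ are the vertices of a regular pentagon with side length 1. Then for every point p on the segment [v₀, v₁] and every point q on the segment [v₂, v₃], one has dist p q ≥ 1. -/
/-- The `k`-th vertex of the regular pentagon of side length `1` centered at the origin,
inscribed in the circle of radius `r = 1/(2 sin(π/5))`. -/
noncomputable def pentagonVertex (k : Fin 5) : EuclideanSpace ℝ (Fin 2) :=
  !₂[(1 / (2 * Real.sin (Real.pi / 5))) * Real.cos (2 * Real.pi * ((k : ℕ) : ℝ) / 5),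
    (1 / (2 * Real.sin (Real.pi / 5))) * Real.sin (2 * Real.pi * ((k : ℕ) : ℝ) / 5)]

private lemma aux_sq (u1 u2 X Y : ℝ) (h : 1 ≤ u1*X + u2*Y) (hn : u1^2 + u2^2 ≤ 1) :
    1 ≤ X^2 + Y^2 := by
  nlinarith [sq_nonneg (u1*Y - u2*X), sq_nonneg X, sq_nonneg Y, h, hn,
    add_nonneg (sq_nonneg X) (sq_nonneg Y)]

/-- Any point on the edge `[v₀, v₁]` of the regular unit pentagon is at distance at
least `1` from any point on the non-adjacent edge `[v₂, v₃]`. -/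
theorem pentagon_nonadjacent_edges_dist_ge_one :
    ∀ p ∈ segment ℝ (pentagonVertex 0) (pentagonVertex 1),
      ∀ q ∈ segment ℝ (pentagonVertex 2) (pentagonVertex 3),
        1 ≤ dist p q := by
  intro p hp q hq
  obtain ⟨a, b, ha, hb, hab, rfl⟩ := hp
  obtain ⟨a', b', ha', hb', hab', rfl⟩ := hq
  have hpi := Real.pi_pos
  have hs : 0 < Real.sin (Real.pi/5) :=
    Real.sin_pos_of_pos_of_lt_pi (by positivity) (by linarith)
  set s := Real.sin (Real.pi/5) with hs_def
  set c := Real.cos (Real.pi/5) with hc_def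
  set r : ℝ := 1/(2*s) with hr_def
  clear_value s c r
  have hsc : s^2 = 1 - c^2 := by
    have := Real.sin_sq_add_cos_sq (Real.pi/5)
    rw [← hs_def, ← hc_def] at this; linarith
  have hcval : c = (1 + Real.sqrt 5)/4 := by rw [hc_def]; exact Real.cos_pi_div_five
  have h5 : Real.sqrt 5 ^ 2 = 5 := Real.sq_sqrt (by norm_num)
  have h53 : Real.sqrt 5 ^ 3 = 5 * Real.sqrt 5 := by
    rw [pow_succ, h5]
  have h5nn : (0:ℝ) ≤ Real.sqrt 5 := Real.sqrt_nonneg 5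
  -- component values
  have h00 : pentagonVertex 0 0 = r * 1 := by
    simp only [pentagonVertex, PiLp.toLp_apply, Matrix.cons_val_zero]
    norm_num [hr_def, hs_def]
  have h01 : pentagonVertex 0 1 = r * 0 := by
    simp only [pentagonVertex, PiLp.toLp_apply, Matrix.cons_val_one, Matrix.head_cons, Matrix.cons_val_zero]
    norm_num
  have harg1 : 2 * Real.pi * ((((1:Fin 5) : ℕ)) : ℝ) / 5 = 2 * (Real.pi/5) := by
    norm_num [show (((1:Fin 5):ℕ)) = 1 from rfl]; ring
  have h10 : pentagonVertex 1 0 = r * (2*c^2 - 1) := by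
    simp only [pentagonVertex, PiLp.toLp_apply, Matrix.cons_val_zero]
    rw [harg1, Real.cos_two_mul, hr_def, hc_def, hs_def]
  have h11 : pentagonVertex 1 1 = r * (2*s*c) := by
    simp only [pentagonVertex, PiLp.toLp_apply, Matrix.cons_val_one, Matrix.head_cons, Matrix.cons_val_zero]
    rw [harg1, Real.sin_two_mul, hr_def, hc_def, hs_def]
  have harg2 : 2 * Real.pi * ((((2:Fin 5) : ℕ)) : ℝ) / 5 = Real.pi - Real.pi/5 := by
    norm_num [show (((2:Fin 5):ℕ)) = 2 from rfl]; ring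
  have h20 : pentagonVertex 2 0 = r * (-c) := by
    simp only [pentagonVertex, PiLp.toLp_apply, Matrix.cons_val_zero]
    rw [harg2, Real.cos_pi_sub, hr_def, hc_def, hs_def]
  have h21 : pentagonVertex 2 1 = r * s := by
    simp only [pentagonVertex, PiLp.toLp_apply, Matrix.cons_val_one, Matrix.head_cons, Matrix.cons_val_zero]
    rw [harg2, Real.sin_pi_sub, hr_def, hs_def]
  have harg3 : 2 * Real.pi * ((((3:Fin 5) : ℕ)) : ℝ) / 5 = Real.pi + Real.pi/5 := by
    norm_num [show (((3:Fin 5):ℕ)) = 3 from rfl]; ring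
  have h30 : pentagonVertex 3 0 = r * (-c) := by
    simp only [pentagonVertex, PiLp.toLp_apply, Matrix.cons_val_zero]
    rw [harg3, Real.cos_add, Real.cos_pi, Real.sin_pi, hr_def, hc_def, hs_def]; ring
  have h31 : pentagonVertex 3 1 = r * (-s) := by
    simp only [pentagonVertex, PiLp.toLp_apply, Matrix.cons_val_one, Matrix.head_cons, Matrix.cons_val_zero]
    rw [harg3, Real.sin_add, Real.cos_pi, Real.sin_pi, hr_def, hs_def]; ring
  rw [EuclideanSpace.dist_eq]
  simp only [PiLp.add_apply, PiLp.smul_apply, smul_eq_mul, Fin.sum_univ_two,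
    Real.dist_eq, sq_abs, h00, h01, h10, h11, h20, h21, h30, h31]
  clear h00 h01 h10 h11 h20 h21 h30 h31 harg1 harg2 harg3 hs_def hc_def hpi
  have hbb : b = 1 - a := by linarith
  have hbb' : b' = 1 - a' := by linarith
  subst hbb hbb'
  set X := a * (r * 1) + (1 - a) * (r * (2 * c ^ 2 - 1)) - (a' * (r * -c) + (1 - a') * (r * -c)) with hX
  set Y := a * (r * 0) + (1 - a) * (r * (2 * s * c)) - (a' * (r * s) + (1 - a') * (r * -s)) with hY
  set u1 : ℝ := r * (2*c^2 - 1) + r * c with hu1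
  set u2 : ℝ := r * (2*s*c) - r * s with hu2
  clear_value X Y u1 u2
  have hge2 : (2:ℝ) ≤ Real.sqrt 5 := by nlinarith [h5, h5nn]
  have hden : (0:ℝ) < 4 * s^2 := by nlinarith [hs]
  have key02 : 1 ≤ u1 * (r*1 - r*(-c)) + u2 * (r*0 - r*s) := by
    have e : u1 * (r*1 - r*(-c)) + u2 * (r*0 - r*s)
        = ((2*c^2+c-1)*(1+c) - s^2*(2*c-1)) / (4*s^2) := by
      rw [hu1, hu2, hr_def]; field_simp; ring
    rw [e, le_div_iff₀ hden, hsc, hcval]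
    linarith [h5, h53, hge2]
  have key03 : 1 ≤ u1 * (r*1 - r*(-c)) + u2 * (r*0 - r*(-s)) := by
    have e : u1 * (r*1 - r*(-c)) + u2 * (r*0 - r*(-s))
        = ((2*c^2+c-1)*(1+c) + s^2*(2*c-1)) / (4*s^2) := by
      rw [hu1, hu2, hr_def]; field_simp; ring
    rw [e, le_div_iff₀ hden, hsc, hcval]
    linarith [h5, h53, hge2]
  have keyeq : (2*c^2+c-1)^2 + s^2*(2*c-1)^2 = 4*s^2 := by
    rw [hsc, hcval]; linear_combination (Real.sqrt 5/8 + 5/8) * h5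
  have key12 : 1 ≤ u1 * (r*(2*c^2-1) - r*(-c)) + u2 * (r*(2*s*c) - r*s) := by
    have e : u1 * (r*(2*c^2-1) - r*(-c)) + u2 * (r*(2*s*c) - r*s)
        = ((2*c^2+c-1)^2 + s^2*(2*c-1)^2) / (4*s^2) := by
      rw [hu1, hu2, hr_def]; field_simp; ring
    rw [e, keyeq, div_self (ne_of_gt hden)]
  have key13 : 1 ≤ u1 * (r*(2*c^2-1) - r*(-c)) + u2 * (r*(2*s*c) - r*(-s)) := by
    have e : u1 * (r*(2*c^2-1) - r*(-c)) + u2 * (r*(2*s*c) - r*(-s))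
        = ((2*c^2+c-1)^2 + s^2*(2*c-1)*(2*c+1)) / (4*s^2) := by
      rw [hu1, hu2, hr_def]; field_simp; ring
    rw [e, le_div_iff₀ hden, hsc, hcval]
    linarith [h5, h53, hge2]
  have hnorm : u1^2 + u2^2 ≤ 1 := by
    have e : u1^2 + u2^2 = ((2*c^2+c-1)^2 + s^2*(2*c-1)^2) / (4*s^2) := by
      rw [hu1, hu2, hr_def]; field_simp; ring
    rw [e, keyeq, div_self (ne_of_gt hden)]
  have key : 1 ≤ u1 * X + u2 * Y := by
    rw [hX, hY]
    linarith [mul_nonneg (mul_nonneg ha ha') (sub_nonneg.mpr key02),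
      mul_nonneg (mul_nonneg ha hb') (sub_nonneg.mpr key03),
      mul_nonneg (mul_nonneg hb ha') (sub_nonneg.mpr key12),
      mul_nonneg (mul_nonneg hb hb') (sub_nonneg.mpr key13)]
  have hfin : 1 ≤ X^2 + Y^2 := aux_sq u1 u2 X Y key hnorm
  calc (1:ℝ) = Real.sqrt 1 := Real.sqrt_one.symm
    _ ≤ Real.sqrt (X^2 + Y^2) := Real.sqrt_le_sqrt hfin
end
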